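/- Let W, Ẇ, A, B be real n×n matrices with W symmetric positive definite and Ẇ symmetric, and let ρ, λ be real numbers. If the matrix S := −Ẇ + A·W + W·Aᵀ − ρ·B·Bᵀ + 2λ·W is negative definite, then, setting M := W⁻¹ and K := −(ρ/2)·Bᵀ·M, the matrix −M·Ẇ·M + (A + B·K)ᵀ·M + M·(A + B·K) + 2λ·M is negative definite. -/

import Mathlib

open Matrix

lemma conj_posDef {n : ℕ} {S P : Matrix (Fin n) (Fin n) ℝ} (hS : S.PosDef)
    (hP : IsUnit P) : (Pᵀ * S * P).PosDef := by
  have hPconj : Pᵀ = Pᴴ := (conjTranspose_eq_transpose_of_trivial P).symm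
  refine posDef_iff_dotProduct_mulVec.mpr ⟨?_, fun x hx => ?_⟩
  · have h := isHermitian_conjTranspose_mul_mul P hS.isHermitian
    rwa [← hPconj] at h
  · have hinj : Function.Injective P.mulVec := mulVec_injective_iff_isUnit.mpr hP
    have hPx : P.mulVec x ≠ 0 := fun h => hx (hinj (by simpa using h))
    have h := (posDef_iff_dotProduct_mulVec.mp hS).2 hPx
    have he : star x ⬝ᵥ (Pᵀ * S * P) *ᵥ x = star (P *ᵥ x) ⬝ᵥ S *ᵥ (P *ᵥ x) := by
      rw [star_mulVec, ← mulVec_mulVec, ← mulVec_mulVec, dotProduct_mulVec, hPconj,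
        dotProduct_mulVec]
    rw [he]
    exact h

theorem stmt_1 (n : ℕ) (W Wdot A B : Matrix (Fin n) (Fin n) ℝ)
    (hW : W.PosDef) (hWdot : Wdot.IsSymm) (ρ lam : ℝ)
    (hS : (-(-Wdot + A * W + W * Aᵀ - ρ • (B * Bᵀ) + (2 * lam) • W)).PosDef) :
    (-(-(W⁻¹ * Wdot * W⁻¹) + (A + B * (-(ρ / 2) • (Bᵀ * W⁻¹)))ᵀ * W⁻¹
        + W⁻¹ * (A + B * (-(ρ / 2) • (Bᵀ * W⁻¹))) + (2 * lam) • W⁻¹)).PosDef := by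
  have hWunit : IsUnit W := hW.isUnit
  have hdet : IsUnit W.det := (isUnit_iff_isUnit_det _).1 hWunit
  have hMunit : IsUnit (W⁻¹) := (Matrix.isUnit_nonsing_inv_iff).2 hWunit
  have hMW : W⁻¹ * W = 1 := nonsing_inv_mul W hdet
  have hWM : W * W⁻¹ = 1 := mul_nonsing_inv W hdet
  have hWsymm : Wᵀ = W := by
    have := hW.isHermitian
    rwa [IsHermitian, conjTranspose_eq_transpose_of_trivial] at this
  have hMsymm : (W⁻¹)ᵀ = W⁻¹ := by rw [Matrix.transpose_nonsing_inv, hWsymm]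
  have key := conj_posDef hS hMunit
  have e1 : ∀ X : Matrix (Fin n) (Fin n) ℝ, W⁻¹ * (W * X) = X := fun X => by
    rw [← Matrix.mul_assoc, hMW, Matrix.one_mul]
  have heq : (W⁻¹)ᵀ * (-(-Wdot + A * W + W * Aᵀ - ρ • (B * Bᵀ) + (2 * lam) • W)) * W⁻¹
      = -(-(W⁻¹ * Wdot * W⁻¹) + (A + B * (-(ρ / 2) • (Bᵀ * W⁻¹)))ᵀ * W⁻¹
        + W⁻¹ * (A + B * (-(ρ / 2) • (Bᵀ * W⁻¹))) + (2 * lam) • W⁻¹) := by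
    rw [hMsymm]
    simp only [transpose_add, transpose_mul, transpose_smul, transpose_transpose, transpose_neg,
      hMsymm, Matrix.mul_neg, Matrix.neg_mul, Matrix.mul_add, Matrix.add_mul, Matrix.mul_sub,
      Matrix.sub_mul, Matrix.mul_smul, Matrix.smul_mul, Matrix.mul_assoc, e1, hWM,
      Matrix.mul_one, Matrix.one_mul]
    module
  rw [← heq]
  exact key
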